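/- For a Tiles instance with sharing number at most 1, the map that sends each trail i₀, f₁, i₁, f₂, …, fₖ₋₁, iₖ₋₁ of the structure graph starting and ending at tile vertices to its subsequence of tile vertices (i₀, i₁, …, iₖ₋₁) is injective. -/

import Mathlib

/-- The structure graph of a Tiles instance: the bipartite graph on tile positions and
features, with an edge between tile position `i` and feature `f` iff `f ∈ T i`. -/
def structureGraph {n : ℕ} {F : Type} [DecidableEq F] (T : Fin n → Finset F) :
    SimpleGraph (Fin n ⊕ F) :=
  SimpleGraph.fromRel (fun x y => ∃ (i : Fin n) (f : F), x = Sum.inl i ∧ y = Sum.inr f ∧ f ∈ T i)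

section Aux

variable {n : ℕ} {F : Type} [DecidableEq F] {T : Fin n → Finset F}

lemma sg_not_adj_inl_inl (i j : Fin n) :
    ¬ (structureGraph T).Adj (Sum.inl i) (Sum.inl j) := by
  simp [structureGraph, SimpleGraph.fromRel_adj]

lemma sg_not_adj_inr_inr (f g : F) :
    ¬ (structureGraph T).Adj (Sum.inr f) (Sum.inr g) := by
  simp [structureGraph, SimpleGraph.fromRel_adj]

lemma sg_adj_inl_inr {i : Fin n} {f : F} :
    (structureGraph T).Adj (Sum.inl i) (Sum.inr f) ↔ f ∈ T i := by
  simp [structureGraph, SimpleGraph.fromRel_adj]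

/-- Decomposition of a trail between two tile vertices. -/
lemma sg_decomp (a b : Fin n) (w : (structureGraph T).Walk (Sum.inl a) (Sum.inl b))
    (hw : w.IsTrail) :
    (∃ h : b = a, HEq w (SimpleGraph.Walk.nil : (structureGraph T).Walk (Sum.inl a) (Sum.inl a))) ∨
    ∃ (f : F) (a' : Fin n) (h1 : (structureGraph T).Adj (Sum.inl a) (Sum.inr f))
      (h2 : (structureGraph T).Adj (Sum.inr f) (Sum.inl a'))
      (w' : (structureGraph T).Walk (Sum.inl a') (Sum.inl b)),
      w = SimpleGraph.Walk.cons h1 (SimpleGraph.Walk.cons h2 w') ∧ a ≠ a' := by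
  suffices H : ∀ (x y : Fin n ⊕ F) (w : (structureGraph T).Walk x y), w.IsTrail →
      ∀ (hx : x = Sum.inl a) (hy : y = Sum.inl b),
      (∃ h : b = a, HEq w (SimpleGraph.Walk.nil :
        (structureGraph T).Walk (Sum.inl a) (Sum.inl a))) ∨
      ∃ (f : F) (a' : Fin n) (h1 : (structureGraph T).Adj (Sum.inl a) (Sum.inr f))
        (h2 : (structureGraph T).Adj (Sum.inr f) (Sum.inl a'))
        (w' : (structureGraph T).Walk (Sum.inl a') (Sum.inl b)),
        HEq w (SimpleGraph.Walk.cons h1 (SimpleGraph.Walk.cons h2 w')) ∧ a ≠ a' by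
    rcases H _ _ w hw rfl rfl with h | ⟨f, a', h1, h2, w', hw', hne⟩
    · exact Or.inl h
    · exact Or.inr ⟨f, a', h1, h2, w', eq_of_heq hw', hne⟩
  intro x y w hw hx hy
  cases w with
  | nil =>
    subst hx
    cases hy
    exact Or.inl ⟨rfl, HEq.rfl⟩
  | cons h1 w' =>
    rename_i v
    subst hx; subst hy
    cases v with
    | inl j => exact absurd h1 (sg_not_adj_inl_inl a j)
    | inr f =>
      cases w' with
      | cons h2 w'' =>
        rename_i v'
        cases v' with
        | inr g => exact absurd h2 (sg_not_adj_inr_inr f g)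
        | inl a' =>
          refine Or.inr ⟨f, a', h1, h2, w'', HEq.rfl, ?_⟩
          intro hA
          subst hA
          have := hw.edges_nodup
          simp [SimpleGraph.Walk.edges_cons, Sym2.eq_swap] at this

lemma sg_key (hshare : ∀ i j : Fin n, i ≠ j → (T i ∩ T j).card ≤ 1) :
    ∀ (k : ℕ) (a₁ b₁ a₂ b₂ : Fin n)
      (w₁ : (structureGraph T).Walk (Sum.inl a₁) (Sum.inl b₁))
      (w₂ : (structureGraph T).Walk (Sum.inl a₂) (Sum.inl b₂)),
      w₁.length ≤ k → w₁.IsTrail → w₂.IsTrail →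
      w₁.support.filterMap Sum.getLeft? = w₂.support.filterMap Sum.getLeft? →
      a₁ = a₂ ∧ b₁ = b₂ ∧ HEq w₁ w₂ := by
  intro k
  induction k using Nat.strong_induction_on with
  | _ k ih =>
  intro a₁ b₁ a₂ b₂ w₁ w₂ hlen h₁ h₂ hsupp
  rcases sg_decomp a₁ b₁ w₁ h₁ with ⟨hb₁, hw₁⟩ | ⟨f₁, a₁', e11, e12, w₁', hw₁, hne₁⟩ <;>
    rcases sg_decomp a₂ b₂ w₂ h₂ with ⟨hb₂, hw₂⟩ | ⟨f₂, a₂', e21, e22, w₂', hw₂, hne₂⟩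
  · subst hb₁; subst hb₂
    have hq₁ := eq_of_heq hw₁; subst hq₁
    have hq₂ := eq_of_heq hw₂; subst hq₂
    simp only [SimpleGraph.Walk.support_nil, List.filterMap_cons, List.filterMap_nil,
      Sum.getLeft?] at hsupp
    simp only [List.cons.injEq, Option.some.injEq] at hsupp
    obtain ⟨h, -⟩ := hsupp
    subst h
    exact ⟨rfl, rfl, HEq.rfl⟩
  · subst hb₁
    have hq₁ := eq_of_heq hw₁; subst hq₁
    subst hw₂
    rw [SimpleGraph.Walk.support_nil, SimpleGraph.Walk.support_cons,
      SimpleGraph.Walk.support_cons, w₂'.support_eq_cons] at hsupp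
    simp [Sum.getLeft?] at hsupp
    exact absurd (SimpleGraph.Walk.start_mem_support w₂') (hsupp.2 a₂')
  · subst hb₂
    have hq₂ := eq_of_heq hw₂; subst hq₂
    subst hw₁
    rw [SimpleGraph.Walk.support_nil, SimpleGraph.Walk.support_cons,
      SimpleGraph.Walk.support_cons, w₁'.support_eq_cons] at hsupp
    simp [Sum.getLeft?] at hsupp
    exact absurd (SimpleGraph.Walk.start_mem_support w₁') (hsupp.2 a₁')
  · subst hw₁; subst hw₂
    rw [SimpleGraph.Walk.support_cons, SimpleGraph.Walk.support_cons,
      SimpleGraph.Walk.support_cons, SimpleGraph.Walk.support_cons] at hsupp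
    simp only [List.filterMap_cons, Sum.getLeft?, List.cons.injEq, Option.some.injEq] at hsupp
    obtain ⟨hA, hsupp⟩ := hsupp
    subst hA
    simp only [SimpleGraph.Walk.length_cons] at hlen
    obtain ⟨hA', hB, hW⟩ := ih w₁'.length (by omega) a₁' b₁ a₂' b₂ w₁' w₂' le_rfl
      h₁.of_cons.of_cons h₂.of_cons.of_cons hsupp
    subst hA'; subst hB
    have hq := eq_of_heq hW; subst hq
    have hf : f₁ = f₂ := by
      refine Finset.card_le_one.mp (hshare a₁ a₁' hne₁) f₁ ?_ f₂ ?_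
      · exact Finset.mem_inter.mpr ⟨sg_adj_inl_inr.mp e11, sg_adj_inl_inr.mp e12.symm⟩
      · exact Finset.mem_inter.mpr ⟨sg_adj_inl_inr.mp e21, sg_adj_inl_inr.mp e22.symm⟩
    subst hf
    exact ⟨rfl, rfl, HEq.rfl⟩

end Aux

/-- For a Tiles instance with sharing number at most 1, the map sending a trail of the
structure graph that starts and ends at tile vertices to the subsequence of tile vertices
appearing along it is injective. -/
theorem tiles_trail_determined_by_tile_vertices {n : ℕ} {F : Type} [DecidableEq F]
    (T : Fin n → Finset F)
    (hshare : ∀ i j : Fin n, i ≠ j → (T i ∩ T j).card ≤ 1)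
    (a₁ b₁ a₂ b₂ : Fin n)
    (w₁ : (structureGraph T).Walk (Sum.inl a₁) (Sum.inl b₁))
    (w₂ : (structureGraph T).Walk (Sum.inl a₂) (Sum.inl b₂))
    (h₁ : w₁.IsTrail) (h₂ : w₂.IsTrail)
    (hsupp : w₁.support.filterMap Sum.getLeft? = w₂.support.filterMap Sum.getLeft?) :
    a₁ = a₂ ∧ b₁ = b₂ ∧ HEq w₁ w₂ :=
  sg_key hshare w₁.length a₁ b₁ a₂ b₂ w₁ w₂ le_rfl h₁ h₂ hsupp
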